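/- Let G = (V, E) be a finite directed graph with no self-loops, let Q ∈ ℕ, and let F_v : ℝ → ℝ (v ∈ V) and G_{uv} : ℝ → ℝ ((u,v) ∈ E) be convex functions, with J(x) = Σ_{v∈V} F_v(x_v) + Σ_{(u,v)∈E} G_{uv}(x_u − x_v) for x ∈ ℤ^V. Suppose x ∈ ℤ^V satisfies 0 ≤ x_v ≤ Q for all v, and that for every subset X ⊆ V and every sign ε ∈ {+1, −1}, if 0 ≤ x_v + ε·(χ_X)_v ≤ Q for all v then J(x) ≤ J(x + ε χ_X). Then x is globally optimal: J(x) ≤ J(y) for every y ∈ ℤ^V with 0 ≤ y_v ≤ Q for all v. -/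

import Mathlib

open scoped Classical

/-- The undirected support graph of the directed edge set `E`. -/
def undirGraph {V : Type*} (E : Finset (V × V)) : SimpleGraph V where
  Adj u v := u ≠ v ∧ ((u, v) ∈ E ∨ (v, u) ∈ E)
  symm := by
    constructor
    intro u v h
    exact ⟨h.1.symm, h.2.elim Or.inr Or.inl⟩
  loopless := by constructor; intro u h; exact h.1 rfl

/-- `S ⊆ V` induces a connected subgraph of the (undirected version of the) graph. -/
def InducesConnected {V : Type*} (E : Finset (V × V)) (S : Set V) : Prop :=
  S.Nonempty ∧ ((undirGraph E).induce S).Connected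

/-- Integer indicator vector of a set of vertices. -/
noncomputable def chiV {V : Type*} (S : Set V) : V → ℤ :=
  S.indicator 1

/-- Integer indicator vector of a set of edges. -/
noncomputable def chiE {V : Type*} {E : Finset (V × V)}
    (T : Set {e : V × V // e ∈ E}) : {e : V × V // e ∈ E} → ℤ :=
  T.indicator 1

/-- Outgoing edges of `S`. -/
def deltaPlus {V : Type*} (E : Finset (V × V)) (S : Set V) :
    Set {e : V × V // e ∈ E} :=
  {e | (e : V × V).1 ∈ S ∧ (e : V × V).2 ∉ S}

/-- Incoming edges of `S`. -/
def deltaMinus {V : Type*} (E : Finset (V × V)) (S : Set V) :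
    Set {e : V × V // e ∈ E} :=
  {e | (e : V × V).1 ∉ S ∧ (e : V × V).2 ∈ S}

/-- The conformal (sign-compatible, coordinatewise) partial order `x ⊑ y`. -/
def Sqle {ι : Type*} (x y : ι → ℤ) : Prop :=
  ∀ i, 0 ≤ x i * y i ∧ |x i| ≤ |y i|

/-- `(x, a)` lies in the integer kernel of `A_TV`. -/
def InKerATV {V : Type*} (E : Finset (V × V)) (x : V → ℤ)
    (a : {e : V × V // e ∈ E} → ℤ) : Prop :=
  ∀ e : {e : V × V // e ∈ E}, x (e : V × V).1 - x (e : V × V).2 = a e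

/-- `(x, a)` is a Graver basis element of `A_TV`: a `⊑`-minimal nonzero
element of the integer kernel. -/
def InGraverATV {V : Type*} (E : Finset (V × V)) (x : V → ℤ)
    (a : {e : V × V // e ∈ E} → ℤ) : Prop :=
  InKerATV E x a ∧ ¬(x = 0 ∧ a = 0) ∧
    ∀ (x' : V → ℤ) (a' : {e : V × V // e ∈ E} → ℤ),
      InKerATV E x' a' → ¬(x' = 0 ∧ a' = 0) → Sqle x' x → Sqle a' a →
        x' = x ∧ a' = a

/-- The objective `J(x) = Σ_v F_v(x_v) + Σ_{(u,v)∈E} G_{uv}(x_u − x_v)`. -/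
noncomputable def JObj {V : Type*} [Fintype V] (E : Finset (V × V))
    (F : V → ℝ → ℝ) (Gf : V × V → ℝ → ℝ) (x : V → ℤ) : ℝ :=
  (∑ v, F v (x v : ℝ)) + ∑ e ∈ E, Gf e ((x e.1 : ℝ) - (x e.2 : ℝ))


private lemma convex_pairR {f : ℝ → ℝ} (hf : ConvexOn ℝ Set.univ f)
    {a b s t : ℝ} (h1 : a ≤ s) (h2 : s ≤ b) (hsum : s + t = a + b) :
    f s + f t ≤ f a + f b := by
  rcases eq_or_lt_of_le (h1.trans h2) with hab | hab
  · have hs : s = a := le_antisymm (hab ▸ h2) h1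
    have ht : t = b := by linarith
    rw [hs, ht]
  · have hba : 0 < b - a := by linarith
    set lam : ℝ := (b - s) / (b - a) with hlam
    have h0 : 0 ≤ lam := div_nonneg (by linarith) hba.le
    have h1' : 0 ≤ 1 - lam := by
      have : lam ≤ 1 := by
        rw [hlam]
        exact div_le_one_of_le₀ (by linarith) hba.le
      linarith
    have hs : lam * a + (1 - lam) * b = s := by
      rw [hlam]
      field_simp
      ring
    have ht : (1 - lam) * a + lam * b = t := by
      have : t = a + b - s := by linarith
      rw [this, hlam]
      field_simp
      ring
    have H1 := hf.2 (Set.mem_univ a) (Set.mem_univ b) h0 h1' (by ring)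
    have H2 := hf.2 (Set.mem_univ a) (Set.mem_univ b) h1' h0 (by ring)
    simp only [smul_eq_mul] at H1 H2
    rw [hs] at H1
    rw [ht] at H2
    linarith

private lemma convex_pairZ {f : ℝ → ℝ} (hf : ConvexOn ℝ Set.univ f)
    {a b s t : ℤ} (h1 : min a b ≤ s) (h2 : s ≤ max a b) (hsum : s + t = a + b) :
    f s + f t ≤ f a + f b := by
  rcases le_total a b with hab | hab
  · have := convex_pairR hf (a := (a : ℝ)) (b := (b : ℝ)) (s := (s : ℝ)) (t := (t : ℝ))
      (by exact_mod_cast (min_eq_left hab ▸ h1)) (by exact_mod_cast (max_eq_right hab ▸ h2))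
      (by exact_mod_cast hsum)
    linarith
  · have := convex_pairR hf (a := (b : ℝ)) (b := (a : ℝ)) (s := (s : ℝ)) (t := (t : ℝ))
      (by exact_mod_cast (min_eq_right hab ▸ h1)) (by exact_mod_cast (max_eq_left hab ▸ h2))
      (by exact_mod_cast (show s + t = b + a by omega))
    linarith

/-- If no up- or down-shift on any vertex subset improves the
objective, then `x` is globally optimal over the box (Kolmogorov–Shioura
optimality certificate). -/
theorem subset_moves_optimality_certificate
    {V : Type*} [Fintype V] [DecidableEq V] (E : Finset (V × V))
    (hloop : ∀ e ∈ E, e.1 ≠ e.2) (Q : ℕ)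
    (F : V → ℝ → ℝ) (Gf : V × V → ℝ → ℝ)
    (hF : ∀ v, ConvexOn ℝ Set.univ (F v))
    (hG : ∀ e ∈ E, ConvexOn ℝ Set.univ (Gf e))
    (x : V → ℤ) (hx : ∀ v, 0 ≤ x v ∧ x v ≤ (Q : ℤ))
    (hopt : ∀ (X : Set V) (ε : ℤ), (ε = 1 ∨ ε = -1) →
      (∀ v, 0 ≤ x v + ε * chiV X v ∧ x v + ε * chiV X v ≤ (Q : ℤ)) →
      JObj E F Gf x ≤ JObj E F Gf (x + ε • chiV X)) :
    ∀ y : V → ℤ, (∀ v, 0 ≤ y v ∧ y v ≤ (Q : ℤ)) →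
      JObj E F Gf x ≤ JObj E F Gf y := by

  -- discrete midpoint convexity of JObj
  have key : ∀ y z : V → ℤ,
      JObj E F Gf (fun v => (y v + z v) / 2)
        + JObj E F Gf (fun v => y v + z v - (y v + z v) / 2)
      ≤ JObj E F Gf y + JObj E F Gf z := by
    intro y z
    have hvert : ∀ v ∈ (Finset.univ : Finset V),
        F v (((y v + z v) / 2 : ℤ) : ℝ) + F v ((y v + z v - (y v + z v) / 2 : ℤ) : ℝ)
          ≤ F v ((y v : ℤ) : ℝ) + F v ((z v : ℤ) : ℝ) := by
      intro v _
      exact convex_pairZ (hF v) (by omega) (by omega) (by omega)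
    have hedge : ∀ e ∈ E,
        Gf e ((((y e.1 + z e.1) / 2 : ℤ) : ℝ) - (((y e.2 + z e.2) / 2 : ℤ) : ℝ))
          + Gf e (((y e.1 + z e.1 - (y e.1 + z e.1) / 2 : ℤ) : ℝ)
              - ((y e.2 + z e.2 - (y e.2 + z e.2) / 2 : ℤ) : ℝ))
          ≤ Gf e (((y e.1 : ℤ) : ℝ) - ((y e.2 : ℤ) : ℝ))
            + Gf e (((z e.1 : ℤ) : ℝ) - ((z e.2 : ℤ) : ℝ)) := by
      intro e he
      have H := convex_pairZ (hG e he) (a := y e.1 - y e.2) (b := z e.1 - z e.2)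
        (s := (y e.1 + z e.1) / 2 - (y e.2 + z e.2) / 2)
        (t := (y e.1 + z e.1 - (y e.1 + z e.1) / 2) - (y e.2 + z e.2 - (y e.2 + z e.2) / 2))
        (by omega) (by omega) (by omega)
      push_cast at H
      convert H using 3 <;> push_cast <;> ring
    have A := Finset.sum_le_sum hvert
    have B := Finset.sum_le_sum hedge
    simp only [Finset.sum_add_distrib] at A B
    simp only [JObj]
    linarith
  have main : ∀ D : ℕ, ∀ y : V → ℤ, (∀ v, 0 ≤ y v ∧ y v ≤ (Q : ℤ)) →
      (∀ v, -(D : ℤ) ≤ y v - x v ∧ y v - x v ≤ (D : ℤ)) →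
      JObj E F Gf x ≤ JObj E F Gf y := by
    intro D
    induction D with
    | zero =>
      intro y hy hd
      have : y = x := funext fun v => by have := hd v; omega
      rw [this]
    | succ D ih =>
      intro y hy hd
      by_cases hD : D = 0
      · subst hD
        have hchiP : ∀ v, chiV {w | x w < y w} v = if x v < y v then 1 else 0 := by
          intro v
          by_cases h : x v < y v
          · rw [chiV, Set.indicator_of_mem (show v ∈ {w | x w < y w} from h), if_pos h]; rfl
          · rw [chiV, Set.indicator_of_notMem (show v ∉ {w | x w < y w} from h), if_neg h]
        have hchiM : ∀ v, chiV {w | y w < x w} v = if y v < x v then 1 else 0 := by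
          intro v
          by_cases h : y v < x v
          · rw [chiV, Set.indicator_of_mem (show v ∈ {w | y w < x w} from h), if_pos h]; rfl
          · rw [chiV, Set.indicator_of_notMem (show v ∉ {w | y w < x w} from h), if_neg h]
        have hp := hopt {w | x w < y w} 1 (Or.inl rfl) (by
          intro v
          have h1 := hd v; have h2 := hx v; have h3 := hy v
          rw [hchiP v]
          split_ifs <;> omega)
        have hq := hopt {w | y w < x w} (-1) (Or.inr rfl) (by
          intro v
          have h1 := hd v; have h2 := hx v; have h3 := hy v
          rw [hchiM v]
          split_ifs <;> omega)
        have hk := key x y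
        have e1 : (fun v => (x v + y v) / 2) = x + (-1 : ℤ) • chiV {w | y w < x w} := by
          funext v
          have h1 := hd v
          simp only [Pi.add_apply, Pi.smul_apply, smul_eq_mul, hchiM v]
          split_ifs <;> omega
        have e2 : (fun v => x v + y v - (x v + y v) / 2)
            = x + (1 : ℤ) • chiV {w | x w < y w} := by
          funext v
          have h1 := hd v
          simp only [Pi.add_apply, Pi.smul_apply, smul_eq_mul, hchiP v]
          split_ifs <;> omega
        rw [e1, e2] at hk
        linarith
      · have hD1 : 1 ≤ D := Nat.one_le_iff_ne_zero.mpr hD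
        have hk := key x y
        have hlo := ih (fun v => (x v + y v) / 2)
          (fun v => by
            have := hx v; have := hy v
            show 0 ≤ (x v + y v) / 2 ∧ (x v + y v) / 2 ≤ (Q : ℤ)
            omega)
          (fun v => by
            have := hd v
            show -(D : ℤ) ≤ (x v + y v) / 2 - x v ∧ (x v + y v) / 2 - x v ≤ (D : ℤ)
            omega)
        have hhi := ih (fun v => x v + y v - (x v + y v) / 2)
          (fun v => by
            have := hx v; have := hy v
            show 0 ≤ x v + y v - (x v + y v) / 2 ∧ x v + y v - (x v + y v) / 2 ≤ (Q : ℤ)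
            omega)
          (fun v => by
            have := hd v
            show -(D : ℤ) ≤ x v + y v - (x v + y v) / 2 - x v ∧
              x v + y v - (x v + y v) / 2 - x v ≤ (D : ℤ)
            omega)
        linarith
  intro y hy
  exact main Q y hy (fun v => by have := hx v; have := hy v; constructor <;> omega)
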